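/- Let R be a Noetherian local ring of depth zero and M a finitely generated free R-module. Then any injective R-linear map g : M → G to a free R-module splits, and hence is versal. -/

import Mathlib

open IsLocalRing

section Helpers

variable {R : Type*} [CommRing R]

/-- Combine a map to `R` and a map to `Fin m → R` into a map to `Fin (m+1) → R`. -/
def consLin {M : Type*} [AddCommGroup M] [Module R M] {m : ℕ}
    (f : M →ₗ[R] R) (F : M →ₗ[R] (Fin m → R)) : M →ₗ[R] (Fin (m + 1) → R) where
  toFun y := Fin.cons (f y) (F y)
  map_add' x y := by
    funext i
    refine Fin.cases ?_ (fun j => ?_) i <;> simp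
  map_smul' r x := by
    funext i
    refine Fin.cases ?_ (fun j => ?_) i <;> simp

@[simp] lemma consLin_apply {M : Type*} [AddCommGroup M] [Module R M] {m : ℕ}
    (f : M →ₗ[R] R) (F : M →ₗ[R] (Fin m → R)) (y : M) :
    consLin f F y = Fin.cons (f y) (F y) := rfl

lemma exists_socle [IsNoetherianRing R] [IsLocalRing R] (hdepth : maximalIdeal R ∈ associatedPrimes R R) :
    ∃ a : R, a ≠ 0 ∧ ∀ r ∈ maximalIdeal R, r * a = 0 := by
  obtain ⟨hp, x, hx⟩ := isAssociatedPrime_iff.mp hdepth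
  refine ⟨x, ?_, ?_⟩
  · rintro rfl
    apply hp.ne_top
    rw [hx, eq_top_iff]
    intro r _
    rw [Submodule.mem_colon_singleton, smul_zero]
    exact Submodule.zero_mem _
  · intro r hr
    rw [hx] at hr
    have := Submodule.mem_colon_singleton.mp hr
    rw [Submodule.mem_bot, smul_eq_mul] at this
    exact this

lemma smul_eq_zero_of_mem_smul_top [IsLocalRing R] {a : R}
    (ha : ∀ r ∈ maximalIdeal R, r * a = 0)
    {G : Type*} [AddCommGroup G] [Module R G] {x : G}
    (hx : x ∈ (maximalIdeal R) • (⊤ : Submodule R G)) : a • x = 0 := by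
  refine Submodule.smul_induction_on hx ?_ ?_
  · intro r hr y _
    rw [smul_smul, mul_comm, ha r hr, zero_smul]
  · intro y z hy hz
    rw [smul_add, hy, hz, add_zero]

lemma exists_unit_coord [IsLocalRing R] {G : Type*} [AddCommGroup G] [Module R G]
    {ι : Type*} (b : Module.Basis ι R G) {x : G}
    (hx : x ∉ (maximalIdeal R) • (⊤ : Submodule R G)) :
    ∃ j, IsUnit (b.repr x j) := by
  by_contra hc
  push_neg at hc
  apply hx
  have hxe : x = Finsupp.linearCombination R b (b.repr x) := (b.linearCombination_repr x).symm
  rw [hxe, Finsupp.linearCombination_apply, Finsupp.sum]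
  refine Submodule.sum_mem _ fun j hj => Submodule.smul_mem_smul ?_ trivial
  exact (IsLocalRing.mem_maximalIdeal _).mpr (hc j)

lemma split_fin [IsNoetherianRing R] [IsLocalRing R] (hdepth : maximalIdeal R ∈ associatedPrimes R R)
    {G : Type*} [AddCommGroup G] [Module R G] [Module.Free R G] :
    ∀ (m : ℕ) (g : (Fin m → R) →ₗ[R] G), Function.Injective g →
      ∃ h : G →ₗ[R] (Fin m → R), h ∘ₗ g = LinearMap.id := by
  intro m
  induction m with
  | zero =>
    intro g hg
    exact ⟨0, by ext v i; exact i.elim0⟩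
  | succ m ih =>
    intro g hg
    obtain ⟨a, ha0, ha⟩ := exists_socle hdepth
    set e₀ : Fin (m + 1) → R := Fin.cons 1 0 with he₀
    -- `g e₀` has a unit coordinate
    have hge₀ : g e₀ ∉ (maximalIdeal R) • (⊤ : Submodule R G) := by
      intro hmem
      have h2 : g (a • e₀) = 0 := by
        rw [map_smul, smul_eq_zero_of_mem_smul_top ha hmem]
      have h3 : a • e₀ = 0 := hg (by rw [h2, map_zero])
      have h4 := congrFun h3 0
      simp [he₀] at h4
      exact ha0 h4
    set b := Module.Free.chooseBasis R G with hb
    obtain ⟨j₀, hu⟩ := exists_unit_coord b hge₀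
    set h₁ : G →ₗ[R] R := ((hu.unit⁻¹ : Rˣ) : R) • b.coord j₀ with hh₁
    have hh₁e₀ : h₁ (g e₀) = 1 := by
      rw [hh₁]
      simp only [LinearMap.smul_apply, Module.Basis.coord_apply, smul_eq_mul]
      exact hu.val_inv_mul
    set cons0 : (Fin m → R) →ₗ[R] (Fin (m + 1) → R) := consLin 0 LinearMap.id with hcons0
    have cons0_apply : ∀ w : Fin m → R, cons0 w = Fin.cons 0 w := by
      intro w; rw [hcons0]; simp
    set P : G →ₗ[R] G :=
      LinearMap.id - (LinearMap.toSpanSingleton R G (g e₀)) ∘ₗ h₁ with hP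
    have P_apply : ∀ y : G, P y = y - h₁ y • g e₀ := by
      intro y; rw [hP]; rfl
    set g' : (Fin m → R) →ₗ[R] G := (P ∘ₗ g) ∘ₗ cons0 with hg'def
    have hg' : Function.Injective g' := by
      rw [← LinearMap.ker_eq_bot, LinearMap.ker_eq_bot']
      intro w hw
      have hw' : g (cons0 w) = g (h₁ (g (cons0 w)) • e₀) := by
        have := hw
        rw [hg'def] at this
        simp only [LinearMap.comp_apply] at this
        rw [P_apply] at this
        rw [map_smul]
        linear_combination (norm := module) this
      have hc := hg hw'
      funext j
      have := congrFun hc j.succ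
      rw [cons0_apply] at this
      simp [he₀] at this
      exact this
    obtain ⟨h', hh'⟩ := ih g' hg'
    set F : G →ₗ[R] (Fin m → R) := h' ∘ₗ P with hF
    set f : G →ₗ[R] R := h₁ - h₁ ∘ₗ (g ∘ₗ (cons0 ∘ₗ F)) with hf
    refine ⟨consLin f F, ?_⟩
    apply LinearMap.ext
    intro v
    -- decompose v
    have hv : v = v 0 • e₀ + cons0 (Fin.tail v) := by
      funext i
      refine Fin.cases ?_ (fun j => ?_) i <;>
        simp [he₀, cons0_apply, Fin.tail]
    set c := v 0 with hcdef
    set w := Fin.tail v with hwdef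
    have hgv : g v = c • g e₀ + g (cons0 w) := by
      conv_lhs => rw [hv]
      rw [map_add, map_smul]
    have hh₁gv : h₁ (g v) = c + h₁ (g (cons0 w)) := by
      rw [hgv, map_add, map_smul, hh₁e₀, smul_eq_mul, mul_one]
    have hPgv : P (g v) = g' w := by
      rw [hg'def]
      simp only [LinearMap.comp_apply]
      rw [P_apply, P_apply, hgv, map_add, map_smul, hh₁e₀, smul_eq_mul, mul_one]
      module
    have hFgv : F (g v) = w := by
      rw [hF]
      simp only [LinearMap.comp_apply]
      rw [hPgv]
      exact LinearMap.ext_iff.mp hh' w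
    simp only [LinearMap.comp_apply, consLin_apply, LinearMap.id_apply]
    funext i
    refine Fin.cases ?_ (fun j => ?_) i
    · simp only [Fin.cons_zero]
      rw [hf]
      simp only [LinearMap.sub_apply, LinearMap.comp_apply]
      rw [hFgv, hh₁gv]
      ring
    · simp only [Fin.cons_succ]
      rw [hFgv]
      rfl

end Helpers

/-- Over a Noetherian local ring of depth zero (the maximal ideal is an associated prime),
any injective map from a finite free module `M` to a free module splits, and hence is versal. -/
theorem splits_and_versal_of_injective_depth_zero {R : Type*} [CommRing R]
    [IsNoetherianRing R] [IsLocalRing R]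
    (hdepth : IsLocalRing.maximalIdeal R ∈ associatedPrimes R R)
    {M : Type*} [AddCommGroup M] [Module R M] [Module.Finite R M] [Module.Free R M]
    {G : Type*} [AddCommGroup G] [Module R G] [Module.Free R G]
    (g : M →ₗ[R] G) (hg : Function.Injective g) :
    (∃ h : G →ₗ[R] M, h ∘ₗ g = LinearMap.id) ∧
      ∀ (G' : Type*) [AddCommGroup G'] [Module R G'] [Module.Free R G'] (φ : M →ₗ[R] G'),
        ∃ h : G →ₗ[R] G', h ∘ₗ g = φ := by
  have key : ∃ h : G →ₗ[R] M, h ∘ₗ g = LinearMap.id := by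
    let b := (Module.Free.chooseBasis R M).reindex
      (Fintype.equivFin (Module.Free.ChooseBasisIndex R M))
    let e := b.equivFun
    obtain ⟨h₀, hh₀⟩ := split_fin hdepth (Fintype.card (Module.Free.ChooseBasisIndex R M))
      (g ∘ₗ (e.symm : (Fin _ → R) →ₗ[R] M))
      (by exact hg.comp e.symm.injective)
    refine ⟨(e.symm : (Fin _ → R) →ₗ[R] M) ∘ₗ h₀, ?_⟩
    apply LinearMap.ext
    intro v
    have := LinearMap.ext_iff.mp hh₀ (e v)
    simp only [LinearMap.comp_apply, LinearEquiv.coe_coe, LinearEquiv.symm_apply_apply,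
      LinearMap.id_apply] at this ⊢
    rw [this, LinearEquiv.symm_apply_apply]
  refine ⟨key, ?_⟩
  intro G' _ _ _ φ
  obtain ⟨h, hh⟩ := key
  exact ⟨φ ∘ₗ h, by rw [LinearMap.comp_assoc, hh, LinearMap.comp_id]⟩
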